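/- In any generalized ear decomposition of a connected graph G, the total number of ears (including bridges) equals |E(G)| - |V(G)| + ψ(G) + 1, where ψ(G) is the number of bridges of G. In particular, this number is independent of the chosen decomposition. -/

import Mathlib

open SimpleGraph Finset MvPolynomial

universe u

variable {V : Type u}

/-- An ear attached to the subgraph `H` of `G`: a nontrivial path (or cycle, if the two
endpoints coincide) between two vertices of `H` all of whose internal vertices and all of
whose edges lie outside `H`. -/
def SimpleGraph.IsEar (G : SimpleGraph V) (H : G.Subgraph) {a b : V} (p : G.Walk a b) : Prop :=
  a ∈ H.verts ∧ b ∈ H.verts ∧ 1 ≤ p.length ∧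
  p.edges.Nodup ∧ p.support.tail.Nodup ∧ (a ≠ b → a ∉ p.support.tail) ∧
  (∀ v ∈ p.support.tail.dropLast, v ∉ H.verts) ∧
  (∀ e ∈ p.edges, e ∉ H.edgeSet)

/-- `G.GEDFrom H₀ H t s e br f` : the subgraph `H` of `G` can be obtained from `H₀` by a
(generalized) ear decomposition consisting of `s` pieces, of which `t` are base pieces
(new cycles or bridges with both endpoints new), `e` are even ears (an initial even cycle
counts as an even ear), and `br` are bridges.  The index `f` records the type of the first
piece: `0` if there is none yet, `1` if it is an odd cycle, `2` if it is an even cycle,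
`3` if it is a bridge. -/
inductive SimpleGraph.GEDFrom (G : SimpleGraph V) (H₀ : G.Subgraph) :
    G.Subgraph → ℕ → ℕ → ℕ → ℕ → ℕ → Prop
  | nil : SimpleGraph.GEDFrom G H₀ H₀ 0 0 0 0 0
  | cycle {H : G.Subgraph} {t s e br f : ℕ} (h : SimpleGraph.GEDFrom G H₀ H t s e br f)
      {a : V} (c : G.Walk a a) (hc : c.IsCycle) (hd : ∀ v ∈ c.support, v ∉ H.verts) :
      SimpleGraph.GEDFrom G H₀ (H ⊔ c.toSubgraph) (t+1) (s+1)
        (e + if Even c.length then 1 else 0) br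
        (if f = 0 then (if Even c.length then 2 else 1) else f)
  | ear {H : G.Subgraph} {t s e br f : ℕ} (h : SimpleGraph.GEDFrom G H₀ H t s e br f)
      {a b : V} (p : G.Walk a b) (hp : G.IsEar H p) :
      SimpleGraph.GEDFrom G H₀ (H ⊔ p.toSubgraph) t (s+1)
        (e + if Even p.length then 1 else 0) br f
  | bridge {H : G.Subgraph} {t s e br f : ℕ} (h : SimpleGraph.GEDFrom G H₀ H t s e br f)
      {a b : V} (hab : G.Adj a b) (hbr : G.IsBridge s(a,b))
      (ha : a ∈ H.verts) (hb : b ∉ H.verts) :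
      SimpleGraph.GEDFrom G H₀ (H ⊔ G.subgraphOfAdj hab) t (s+1) e (br+1)
        (if f = 0 then 3 else f)
  | bridgeBase {H : G.Subgraph} {t s e br f : ℕ} (h : SimpleGraph.GEDFrom G H₀ H t s e br f)
      {a b : V} (hab : G.Adj a b) (hbr : G.IsBridge s(a,b))
      (ha : a ∉ H.verts) (hb : b ∉ H.verts) :
      SimpleGraph.GEDFrom G H₀ (H ⊔ G.subgraphOfAdj hab) (t+1) (s+1) e (br+1)
        (if f = 0 then 3 else f)

/-- A generalized ear decomposition of a subgraph of `G`, starting from scratch. -/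
def SimpleGraph.GED (G : SimpleGraph V) : G.Subgraph → ℕ → ℕ → ℕ → ℕ → ℕ → Prop :=
  SimpleGraph.GEDFrom G ⊥

/-- The number of connected components of `G`. -/
noncomputable def numComponents (G : SimpleGraph V) : ℕ := Nat.card G.ConnectedComponent

/-- `ψ(G)` : the number of bridges of `G`. -/
noncomputable def psi (G : SimpleGraph V) : ℕ := {e : Sym2 V | G.IsBridge e}.ncard

/-- `φ(G)` : the minimum number of even ears in a generalized ear decomposition of `G`
(one base piece per connected component). -/
noncomputable def phi (G : SimpleGraph V) : ℕ :=
  sInf {e | ∃ s br f, G.GED ⊤ (numComponents G) s e br f}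

/-- `φ_odd(G)` : the minimum number of even ears in a generalized ear decomposition of `G`
starting with an odd cycle. -/
noncomputable def phiOdd (G : SimpleGraph V) : ℕ :=
  sInf {e | ∃ s br, G.GED ⊤ 1 s e br 1}

/-- 2-edge-connected: connected and bridgeless. -/
def SimpleGraph.IsTwoEdgeConnected (G : SimpleGraph V) : Prop :=
  G.Connected ∧ ∀ e, ¬ G.IsBridge e

/-- Factor-critical: deleting any vertex leaves a graph with a perfect matching. -/
def SimpleGraph.IsFactorCritical (G : SimpleGraph V) : Prop :=
  ∀ v : V, ∃ M : G.Subgraph, M.IsMatching ∧ M.verts = {v}ᶜ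

/-- Matching-critical: every connected component is factor-critical. -/
def SimpleGraph.IsMatchingCritical (G : SimpleGraph V) : Prop :=
  ∀ v : V, ∃ M : G.Subgraph, M.IsMatching ∧ M.verts = {w | G.Reachable v w} \ {v}

/-- The matching number `ν(G)`. -/
noncomputable def matchNum (G : SimpleGraph V) : ℕ :=
  sSup {n | ∃ M : G.Subgraph, M.IsMatching ∧ M.edgeSet.ncard = n}

/-- Non-bipartite: contains an odd cycle. -/
def SimpleGraph.Nonbipartite (G : SimpleGraph V) : Prop :=
  ∃ (a : V) (c : G.Walk a a), c.IsCycle ∧ Odd c.length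

/-- Every connected component of `G` contains an odd cycle. -/
def allCompsOdd (G : SimpleGraph V) : Prop :=
  ∀ v : V, ∃ (a : V) (c : G.Walk a a), G.Reachable v a ∧ c.IsCycle ∧ Odd c.length

/-- The replication `p_a(G)` of `G` by a vector `a ∈ ℕ^V`: each vertex `v` is replaced by
`a v` mutually non-adjacent copies, copies of adjacent vertices being adjacent. -/
def Replication (G : SimpleGraph V) (a : V → ℕ) : SimpleGraph (Σ v : V, Fin (a v)) where
  Adj x y := G.Adj x.1 y.1
  symm := by constructor; exact fun _ _ h => G.adj_symm h
  loopless := by constructor; exact fun x h => G.irrefl h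

/-- The contraction `G/F` of an edge set `F` of `G`. -/
def contractG (G : SimpleGraph V) (F : Set (Sym2 V)) :
    SimpleGraph (Quot (fun u v : V => s(u,v) ∈ F)) where
  Adj x y := x ≠ y ∧ ∃ u v, G.Adj u v ∧ Quot.mk _ u = x ∧ Quot.mk _ v = y
  symm := by
    constructor
    rintro x y ⟨hxy, u, v, h, hu, hv⟩
    exact ⟨hxy.symm, v, u, h.symm, hv, hu⟩
  loopless := by constructor; exact fun x h => h.1 rfl

/-- The subdivision `G ≻ F` of an edge set `F` of `G`: every non-bridge edge `uv ∈ F` is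
replaced by a path `u-w-v` through a new vertex `w`, and for every bridge `uv ∈ F`
a new vertex `w` and the two edges `uw`, `wv` are added (keeping `uv`). -/
def subdivideG (G : SimpleGraph V) (F : Set (Sym2 V)) :
    SimpleGraph (V ⊕ {e : Sym2 V // e ∈ F}) where
  Adj x y :=
    match x, y with
    | Sum.inl u, Sum.inl v => G.Adj u v ∧ (s(u,v) ∉ F ∨ G.IsBridge s(u,v))
    | Sum.inl u, Sum.inr e => u ∈ e.1
    | Sum.inr e, Sum.inl u => u ∈ e.1
    | Sum.inr _, Sum.inr _ => False
  symm := by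
    constructor
    rintro (u|e) (v|g) h
    · refine ⟨h.1.symm, ?_⟩
      rw [Sym2.eq_swap]
      exact h.2
    · exact h
    · exact h
    · exact h
  loopless := by
    constructor
    rintro (u|e) h
    · exact G.irrefl h.1
    · exact h

/-- The monomial `x_i x_j` associated to an edge `{i,j}`. -/
noncomputable def edgeMonomial (K : Type) [CommRing K] (e : Sym2 V) : MvPolynomial V K :=
  Sym2.lift ⟨fun i j => X i * X j, fun i j => mul_comm _ _⟩ e

/-- The edge ideal `I_G ⊆ K[x_v : v ∈ V]` of the graph `G`. -/
noncomputable def edgeIdeal (K : Type) [CommRing K] (G : SimpleGraph V) :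
    Ideal (MvPolynomial V K) :=
  Ideal.span (edgeMonomial K '' G.edgeSet)

/-- The monomial prime `m^{1_U}` generated by the variables indexed by `U`. -/
noncomputable def vIdeal (K : Type) [CommRing K] (U : Set V) : Ideal (MvPolynomial V K) :=
  Ideal.span ((fun v => (X v : MvPolynomial V K)) '' U)

/-- The maximal homogeneous ideal `(x_v : v ∈ V)`. -/
noncomputable def maxIdeal (K : Type) [CommRing K] : Ideal (MvPolynomial V K) :=
  vIdeal K Set.univ

/-- `Ass(I_G^k)`, the set of associated primes of `R/I_G^k`. -/
noncomputable def AssSet (K : Type) [Field K] (G : SimpleGraph V) (k : ℕ) :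
    Set (Ideal (MvPolynomial V K)) :=
  associatedPrimes (MvPolynomial V K) (MvPolynomial V K ⧸ (edgeIdeal K G ^ k))

/-- `dstab(I_G)`: the least `k` with `m ∈ Ass(I_G^k)`. -/
noncomputable def dstab (K : Type) [Field K] (G : SimpleGraph V) : ℕ :=
  sInf {k | maxIdeal (V := V) K ∈ AssSet K G k}

/-- `astab(I_G)`: the least `k ≥ 1` with `Ass(I_G^k) = Ass(I_G^{k+i})` for all `i ≥ 0`. -/
noncomputable def astab (K : Type) [Field K] (G : SimpleGraph V) : ℕ :=
  sInf {k | 1 ≤ k ∧ ∀ i : ℕ, AssSet K G (k + i) = AssSet K G k}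

/-- The neighbourhood `N(Z)` of a set of vertices. -/
def nbhd (G : SimpleGraph V) (Z : Set V) : Set V := {v | ∃ z ∈ Z, G.Adj v z}

/-- A coclique (independent) set of vertices. -/
def IsCoclique (G : SimpleGraph V) (Z : Set V) : Prop := ∀ u ∈ Z, ∀ w ∈ Z, ¬ G.Adj u w

/-- `D*(U)` : the collection of `U`-dominant* subsets of `U` (empty if `Z = V \ U` is not
independent): `W ⊆ V \ (Z ∪ N(Z))` with either `W = ∅` or `V = N(W) ∪ N(Z) ∪ Z` and every
connected component of the induced subgraph `G_W` containing an odd cycle. -/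
def Dstar (G : SimpleGraph V) (U : Set V) : Set (Set V) :=
  {W | IsCoclique G Uᶜ ∧ W ⊆ U \ nbhd G Uᶜ ∧
    (W = ∅ ∨ ((Set.univ : Set V) = nbhd G W ∪ nbhd G Uᶜ ∪ Uᶜ ∧
      allCompsOdd (G.induce W)))}

/-- `ν*(G_W) = (|W| + φ(G_W) + ψ(G_W) - t_W)/2`, `t_W` the number of components of `G_W`. -/
noncomputable def nustar (G : SimpleGraph V) (W : Set V) : ℕ :=
  (W.ncard + phi (G.induce W) + psi (G.induce W) - numComponents (G.induce W)) / 2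

section Aux
variable {G : SimpleGraph V}

lemma ncard_list {α : Type*} (l : List α) (hl : l.Nodup) : {v | v ∈ l}.ncard = l.length := by
  classical
  have : {v | v ∈ l} = ↑l.toFinset := by ext x; simp
  rw [this, Set.ncard_coe_finset, List.toFinset_card_of_nodup hl]

lemma tail_support_eq {a b : V} (p : G.Walk a b) (hp : 1 ≤ p.length) :
    p.support.tail = p.support.tail.dropLast ++ [b] := by
  have hne : p.support.tail ≠ [] := by
    have := p.length_support
    intro h
    have := congrArg List.length h
    simp only [List.length_tail, List.length_nil] at this
    omega
  have h1 : p.support.getLast? = some b := by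
    rw [List.getLast?_eq_getLast p.support_ne_nil, p.getLast_support]
  obtain ⟨c, t', ht⟩ := List.exists_cons_of_ne_nil hne
  have h2 : p.support.tail.getLast? = some b := by
    rw [p.support_eq_cons, ht, List.getLast?_cons_cons] at h1
    rw [ht, h1]
  exact (List.dropLast_append_getLast? b h2).symm

lemma end_mem_tail_support {a b : V} (p : G.Walk a b) (hp : 1 ≤ p.length) :
    b ∈ p.support.tail := by
  rw [tail_support_eq p hp]
  simp

lemma walk_in_subgraph {H : G.Subgraph} (hH : H.Connected) {a b : V}
    (ha : a ∈ H.verts) (hb : b ∈ H.verts) :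
    ∃ q : G.Walk a b, q.IsPath ∧ (∀ v ∈ q.support, v ∈ H.verts) ∧
      (∀ e ∈ q.edges, e ∈ H.edgeSet) := by
  classical
  obtain ⟨w⟩ := hH ⟨a, ha⟩ ⟨b, hb⟩
  obtain ⟨w', hw'⟩ : ∃ w' : H.coe.Walk ⟨a, ha⟩ ⟨b, hb⟩, w'.IsPath := ⟨w.toPath, w.toPath.2⟩
  refine ⟨w'.map H.hom, Walk.map_isPath_of_injective Subgraph.hom_injective hw', ?_, ?_⟩
  · intro v hv
    replace hv : v ∈ (w'.map H.hom).support := hv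
    rw [Walk.support_map, List.mem_map] at hv
    obtain ⟨x, _, rfl⟩ := hv
    exact x.2
  · intro e he
    replace he : e ∈ (w'.map H.hom).edges := he
    rw [Walk.edges_map, List.mem_map] at he
    obtain ⟨e', he', rfl⟩ := he
    have h2 := Walk.edges_subset_edgeSet w' he'
    revert h2
    refine Sym2.ind (fun x y h => ?_) e'
    rw [SimpleGraph.mem_edgeSet, Subgraph.coe_adj] at h
    exact Subgraph.mem_edgeSet.mpr h

lemma ear_not_bridge {H : G.Subgraph} (hH : H.Connected) {a b : V}
    {p : G.Walk a b} (hp : G.IsEar H p) {e : Sym2 V} (he : e ∈ p.edges) :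
    ¬ G.IsBridge e := by
  obtain ⟨ha, hb, hlen, hed, htl, hnab, hint, hne⟩ := hp
  rw [SimpleGraph.isBridge_iff_mem_and_forall_cycle_notMem (p.edges_subset_edgeSet he)]
  push_neg
  by_cases hab : a = b
  · subst hab
    refine ⟨a, p, ⟨⟨⟨hed⟩, fun hnil => by simp [hnil] at hlen⟩, htl⟩, he⟩
  · obtain ⟨q, hq, hqs, hqe⟩ := walk_in_subgraph hH hb ha
    have hdisj : ∀ x ∈ p.support.tail, x ∉ q.support.tail := by
      intro x hx hx'
      rw [tail_support_eq p hlen, List.mem_append] at hx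
      rcases hx with hx | hx
      · exact hint x hx (hqs x (List.mem_of_mem_tail hx'))
      · simp only [List.mem_singleton] at hx
        subst hx
        have := hq.support_nodup
        rw [q.support_eq_cons] at this
        exact (List.nodup_cons.mp this).1 hx'
    refine ⟨a, p.append q, ⟨⟨⟨?_⟩, ?_⟩, ?_⟩, by simp [Walk.edges_append, he]⟩
    · rw [Walk.edges_append]
      refine List.Nodup.append hed hq.isTrail.edges_nodup ?_
      intro x hx hx'
      exact hne x hx (hqe x hx')
    · intro hnil
      have := congrArg Walk.length hnil
      rw [Walk.length_append] at this
      simp only [Walk.length_nil] at this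
      omega
    · rw [Walk.tail_support_append]
      exact List.Nodup.append htl hq.support_nodup.tail hdisj

lemma ged_count [Fintype V] {H : G.Subgraph} {t s e br f : ℕ}
    (h : G.GEDFrom ⊥ H t s e br f) :
    t ≤ 1 →
    ((t = 0 → H = ⊥ ∧ s = 0 ∧ br = 0) ∧
     (t = 1 → H.Connected ∧ s + H.verts.ncard = H.edgeSet.ncard + br + 1 ∧
       {e' : Sym2 V | e' ∈ H.edgeSet ∧ G.IsBridge e'}.ncard = br)) := by
  classical
  induction h with
  | nil =>
    exact fun _ => ⟨fun _ => ⟨rfl, rfl, rfl⟩, fun h1 => absurd h1 zero_ne_one⟩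
  | cycle h c hc hd ih =>
    rename_i H t s e br f a
    intro ht
    obtain ⟨hbot, hs, hbr0⟩ := (ih (by omega)).1 (by omega)
    subst hbot hs hbr0
    refine ⟨fun h0 => absurd h0 (Nat.succ_ne_zero _), fun _ => ?_⟩
    rw [bot_sup_eq]
    have hn3 := hc.three_le_length
    have hv : c.toSubgraph.verts = {v | v ∈ c.support.tail} := by
      rw [Walk.verts_toSubgraph]
      ext v
      simp only [Set.mem_setOf_eq]
      constructor
      · intro hv
        rw [c.support_eq_cons] at hv
        rcases List.mem_cons.mp hv with rfl | h'
        · exact end_mem_tail_support c (by omega)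
        · exact h'
      · exact fun h' => List.mem_of_mem_tail h'
    have hvc : c.toSubgraph.verts.ncard = c.length := by
      rw [hv, ncard_list _ hc.support_nodup, List.length_tail, c.length_support]
      omega
    have hec : c.toSubgraph.edgeSet.ncard = c.length := by
      rw [Walk.edgeSet_toSubgraph, Walk.edgeSet, ncard_list _ hc.edges_nodup, c.length_edges]
    refine ⟨c.toSubgraph_connected, by rw [hvc, hec]; omega, ?_⟩
    have hempty : {e' : Sym2 V | e' ∈ c.toSubgraph.edgeSet ∧ G.IsBridge e'} = ∅ := by
      ext e'
      simp only [Set.mem_setOf_eq, Set.mem_empty_iff_false, iff_false, not_and]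
      intro he' hbr'
      rw [Walk.edgeSet_toSubgraph] at he'
      exact (SimpleGraph.isBridge_iff_mem_and_forall_cycle_notMem (c.edges_subset_edgeSet he')).mp hbr' c hc he'
    rw [hempty, Set.ncard_empty]
  | ear h p hp ih =>
    rename_i H t s e br f a b
    intro ht
    have key1 : t = 0 → False := by
      intro ht0
      obtain ⟨hbot, -, -⟩ := (ih ht).1 ht0
      rw [hbot] at hp
      exact absurd hp.1 (by simp [Subgraph.verts_bot])
    have ht1 : t = 1 := by by_contra h'; exact key1 (by omega)
    obtain ⟨hH, hcount, hbrc⟩ := (ih ht).2 ht1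
    refine ⟨fun h0 => (key1 h0).elim, fun _ => ?_⟩
    have hp' := hp
    obtain ⟨ha, hb, hlen, hed, htl, hnab, hint, hne⟩ := hp'
    have hverts : (H ⊔ p.toSubgraph).verts
        = H.verts ∪ {v | v ∈ p.support.tail.dropLast} := by
      rw [Subgraph.verts_sup, Walk.verts_toSubgraph]
      ext v
      simp only [Set.mem_union, Set.mem_setOf_eq]
      constructor
      · rintro (hv | hv)
        · exact Or.inl hv
        · rw [p.support_eq_cons] at hv
          rcases List.mem_cons.mp hv with rfl | hv
          · exact Or.inl ha
          · rw [tail_support_eq p hlen, List.mem_append] at hv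
            rcases hv with hv | hv
            · exact Or.inr hv
            · simp only [List.mem_singleton] at hv
              subst hv
              exact Or.inl hb
      · rintro (hv | hv)
        · exact Or.inl hv
        · exact Or.inr (List.mem_of_mem_tail ((List.dropLast_sublist _).subset hv))
    have hDnodup : p.support.tail.dropLast.Nodup :=
      htl.sublist (List.dropLast_sublist _)
    have hvcard : (H ⊔ p.toSubgraph).verts.ncard
        = H.verts.ncard + (p.length - 1) := by
      rw [hverts, Set.ncard_union_eq ?disj, ncard_list _ hDnodup,
        List.length_dropLast, List.length_tail, p.length_support]
      · omega
      case disj =>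
        rw [Set.disjoint_right]
        exact fun v hv => hint v hv
    have hecard : (H ⊔ p.toSubgraph).edgeSet.ncard = H.edgeSet.ncard + p.length := by
      rw [Subgraph.edgeSet_sup, Walk.edgeSet_toSubgraph, Set.ncard_union_eq ?d2, Walk.edgeSet,
        ncard_list _ hed, p.length_edges]
      case d2 =>
        rw [Set.disjoint_right]
        exact fun e' he' => hne e' he'
    have hcon : (H ⊔ p.toSubgraph).Connected := by
      refine Subgraph.connected_sup hH.preconnected p.toSubgraph_connected.preconnected ⟨a, ?_⟩
      rw [Subgraph.verts_inf]
      exact ⟨ha, p.start_mem_verts_toSubgraph⟩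
    refine ⟨hcon, by rw [hvcard, hecard]; omega, ?_⟩
    have hset : {e' : Sym2 V | e' ∈ (H ⊔ p.toSubgraph).edgeSet ∧ G.IsBridge e'}
        = {e' | e' ∈ H.edgeSet ∧ G.IsBridge e'} := by
      ext e'
      simp only [Set.mem_setOf_eq, Subgraph.edgeSet_sup, Set.mem_union,
        Walk.edgeSet_toSubgraph]
      constructor
      · rintro ⟨(h1 | h1), h2⟩
        · exact ⟨h1, h2⟩
        · exact absurd h2 (ear_not_bridge hH hp h1)
      · rintro ⟨h1, h2⟩
        exact ⟨Or.inl h1, h2⟩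
    rw [hset, hbrc]
  | bridge h hab hbr ha hb ih =>
    rename_i H t s e br f a b
    intro ht
    have key1 : t = 0 → False := by
      intro ht0
      obtain ⟨hbot, -, -⟩ := (ih ht).1 ht0
      rw [hbot] at ha
      exact absurd ha (by simp [Subgraph.verts_bot])
    have ht1 : t = 1 := by by_contra h'; exact key1 (by omega)
    obtain ⟨hH, hcount, hbrc⟩ := (ih ht).2 ht1
    refine ⟨fun h0 => (key1 h0).elim, fun _ => ?_⟩
    have hedge : s(a, b) ∉ H.edgeSet := by
      intro hmem
      exact hb (H.edge_vert (Subgraph.mem_edgeSet.mp hmem).symm)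
    have hverts : (H ⊔ G.subgraphOfAdj hab).verts = insert b H.verts := by
      rw [Subgraph.verts_sup]
      ext v
      simp only [SimpleGraph.subgraphOfAdj_verts, Set.mem_union, Set.mem_insert_iff,
        Set.mem_singleton_iff]
      constructor
      · rintro (hv | rfl | rfl)
        · exact Or.inr hv
        · exact Or.inr ha
        · exact Or.inl rfl
      · rintro (rfl | hv)
        · exact Or.inr (Or.inr rfl)
        · exact Or.inl hv
    have hedges : (H ⊔ G.subgraphOfAdj hab).edgeSet = insert s(a, b) H.edgeSet := by
      rw [Subgraph.edgeSet_sup, SimpleGraph.edgeSet_subgraphOfAdj, Set.union_singleton]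
    have hvcard : (H ⊔ G.subgraphOfAdj hab).verts.ncard = H.verts.ncard + 1 := by
      rw [hverts, Set.ncard_insert_of_notMem hb]
    have hecard : (H ⊔ G.subgraphOfAdj hab).edgeSet.ncard = H.edgeSet.ncard + 1 := by
      rw [hedges, Set.ncard_insert_of_notMem hedge]
    have hcon : (H ⊔ G.subgraphOfAdj hab).Connected := by
      refine Subgraph.connected_sup hH.preconnected (SimpleGraph.Subgraph.subgraphOfAdj_connected hab).preconnected ⟨a, ?_⟩
      rw [Subgraph.verts_inf]
      exact ⟨ha, by simp⟩
    refine ⟨hcon, by rw [hvcard, hecard]; omega, ?_⟩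
    have hset : {e' : Sym2 V | e' ∈ (H ⊔ G.subgraphOfAdj hab).edgeSet ∧ G.IsBridge e'}
        = insert s(a, b) {e' | e' ∈ H.edgeSet ∧ G.IsBridge e'} := by
      rw [hedges]
      ext e'
      simp only [Set.mem_setOf_eq, Set.mem_insert_iff]
      constructor
      · rintro ⟨(rfl | h1), h2⟩
        · exact Or.inl rfl
        · exact Or.inr ⟨h1, h2⟩
      · rintro (rfl | ⟨h1, h2⟩)
        · exact ⟨Or.inl rfl, hbr⟩
        · exact ⟨Or.inr h1, h2⟩
    rw [hset, Set.ncard_insert_of_notMem (fun hmem => hedge hmem.1), hbrc]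
  | bridgeBase h hab hbr ha hb ih =>
    rename_i H t s e br f a b
    intro ht
    obtain ⟨hbot, hs, hbr0⟩ := (ih (by omega)).1 (by omega)
    subst hbot hs hbr0
    refine ⟨fun h0 => absurd h0 (Nat.succ_ne_zero _), fun _ => ?_⟩
    rw [bot_sup_eq]
    have hvcard : (G.subgraphOfAdj hab).verts.ncard = 2 := by
      rw [SimpleGraph.subgraphOfAdj_verts, Set.ncard_pair hab.ne]
    have hecard : (G.subgraphOfAdj hab).edgeSet.ncard = 1 := by
      rw [SimpleGraph.edgeSet_subgraphOfAdj, Set.ncard_singleton]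
    refine ⟨SimpleGraph.Subgraph.subgraphOfAdj_connected hab, by rw [hvcard, hecard], ?_⟩
    have hset : {e' : Sym2 V | e' ∈ (G.subgraphOfAdj hab).edgeSet ∧ G.IsBridge e'}
        = {s(a, b)} := by
      ext e'
      simp only [Set.mem_setOf_eq, SimpleGraph.edgeSet_subgraphOfAdj,
        Set.mem_singleton_iff]
      exact ⟨fun h' => h'.1, fun h' => ⟨h', h' ▸ hbr⟩⟩
    rw [hset, Set.ncard_singleton]


end Aux

/-- any generalized ear decomposition of a connected graph `G` has exactly
`|E(G)| - |V(G)| + ψ(G) + 1` pieces (stated additively in `ℕ`); in particular this number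
is independent of the decomposition. -/
theorem stmt3 [Fintype V] (G : SimpleGraph V) (hG : G.Connected)
    (s e br f : ℕ) (h : G.GED ⊤ 1 s e br f) :
    s + Fintype.card V = G.edgeSet.ncard + psi G + 1 := by
  have h' : G.GEDFrom ⊥ ⊤ 1 s e br f := h
  obtain ⟨-, hcount, hbrc⟩ := (ged_count h' le_rfl).2 rfl
  have hv : (⊤ : G.Subgraph).verts.ncard = Fintype.card V := by
    rw [Subgraph.verts_top, Set.ncard_univ, Nat.card_eq_fintype_card]
  have hpsi : psi G = br := by
    rw [psi, ← hbrc]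
    congr 1
    ext e'
    simp only [Set.mem_setOf_eq, Subgraph.edgeSet_top]
    exact ⟨fun h' => ⟨by
        induction e' using Sym2.ind with
        | h u v => exact G.mem_edgeSet.mpr (h'.reachable_iff_adj.mp (hG.preconnected u v)), h'⟩,
      fun h' => h'.2⟩
  rw [hv, Subgraph.edgeSet_top] at hcount
  rw [hpsi]
  exact hcount
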